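/- Under the weighted measure P_Θ^n on S_n with weights θ_m, the k-th factorial moment of the cycle count C_m satisfies E_Θ[(C_m)_k] = (θ_m/m)^k · h_{n−mk}/h_n whenever mk ≤ n, where (c)_k = c(c−1)···(c−k+1) and h_j is the normalization constant (with h_j := 0 for j < 0). -/

import Mathlib

open Nat Finset

/-- Full cycle type: cycle type together with fixed points as 1-cycles. -/
noncomputable def fullCycleType {n : ℕ} (σ : Equiv.Perm (Fin n)) : Multiset ℕ :=
  σ.cycleType + Multiset.replicate (n - σ.cycleType.sum) 1

/-- `C_m(σ)`: the number of cycles of length `m` of `σ`. -/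
noncomputable def cycleCount {n : ℕ} (σ : Equiv.Perm (Fin n)) (m : ℕ) : ℕ :=
  (fullCycleType σ).count m

open Equiv Equiv.Perm

section basic
variable {n : ℕ}

lemma cycleType_sum_le (σ : Perm (Fin n)) : σ.cycleType.sum ≤ n := by
  rw [sum_cycleType]
  simpa using Finset.card_le_univ σ.support

lemma sum_fullCycleType (σ : Perm (Fin n)) : (fullCycleType σ).sum = n := by
  have := cycleType_sum_le σ
  simp only [fullCycleType, Multiset.sum_add, Multiset.sum_replicate, smul_eq_mul, mul_one]
  omega

lemma le_of_mem_fullCycleType {σ : Perm (Fin n)} {a : ℕ} (ha : a ∈ fullCycleType σ) : a ≤ n := by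
  have h := Multiset.single_le_sum (fun x _ => Nat.zero_le x) a ha
  rwa [sum_fullCycleType] at h

lemma cycleCount_eq_zero_of_lt {σ : Perm (Fin n)} {i : ℕ} (h : n < i) : cycleCount σ i = 0 := by
  rw [cycleCount, Multiset.count_eq_zero]
  intro hmem
  exact absurd (le_of_mem_fullCycleType hmem) (by omega)

lemma cycleCount_one_eq (σ : Perm (Fin n)) : cycleCount σ 1 = n - σ.support.card := by
  rw [cycleCount, fullCycleType, Multiset.count_add, Multiset.count_replicate, if_pos rfl]
  have h1 : σ.cycleType.count 1 = 0 := by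
    rw [Multiset.count_eq_zero]
    intro hmem
    have := two_le_of_mem_cycleType hmem
    omega
  rw [h1, sum_cycleType, zero_add]

/-- cycle length of the point `x` (with fixed points having length 1). -/
def per (σ : Perm (Fin n)) (x : Fin n) : ℕ :=
  if σ x = x then 1 else (σ.cycleOf x).support.card

lemma card_per_eq {m : ℕ} (hm : 1 ≤ m) (σ : Perm (Fin n)) :
    (univ.filter fun x => per σ x = m).card = m * cycleCount σ m := by
  rcases eq_or_lt_of_le hm with h1 | h2
  · -- m = 1
    subst h1
    have : (univ.filter fun x => per σ x = 1) = σ.supportᶜ := by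
      ext x
      simp only [mem_filter, mem_univ, true_and, Finset.mem_compl, mem_support, not_not]
      constructor
      · intro hx
        by_contra hc
        rw [per, if_neg hc] at hx
        have := two_le_card_support_cycleOf_iff.2 hc
        omega
      · intro hx
        rw [per, if_pos hx]
    rw [this, Finset.card_compl, cycleCount_one_eq, one_mul]
    simp
  · -- 2 ≤ m
    have key : (univ.filter fun x => per σ x = m)
        = (σ.cycleFactorsFinset.filter fun c => c.support.card = m).biUnion
            (fun c => c.support) := by
      ext x
      simp only [mem_filter, mem_biUnion, mem_univ, true_and]
      constructor
      · intro hx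
        have hσx : σ x ≠ x := by
          intro h; rw [per, if_pos h] at hx; omega
        refine ⟨σ.cycleOf x, ⟨?_, ?_⟩, ?_⟩
        · exact cycleOf_mem_cycleFactorsFinset_iff.2 (mem_support.2 hσx)
        · rw [per, if_neg hσx] at hx; exact hx
        · exact mem_support_cycleOf_iff.2 ⟨Equiv.Perm.SameCycle.refl _ _, mem_support.2 hσx⟩
      · rintro ⟨c, ⟨hc, hcard⟩, hxc⟩
        have hcyc : c = σ.cycleOf x := cycle_is_cycleOf hxc hc
        have hσx : σ x ≠ x := by
          have h1 := (mem_cycleFactorsFinset_iff.1 hc).2 x hxc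
          have h2 := (mem_cycleFactorsFinset_iff.1 hc).1.ne_one
          have := mem_support.1 hxc
          rw [← h1]
          exact this
        rw [per, if_neg hσx, ← hcyc, hcard]
    rw [key, Finset.card_biUnion]
    · rw [Finset.sum_congr rfl (fun c hc => (mem_filter.1 hc).2), Finset.sum_const, smul_eq_mul,
        mul_comm]
      congr 1
      -- cycleCount σ m = card of filtered factors
      rw [cycleCount, fullCycleType, Multiset.count_add, Multiset.count_replicate,
        if_neg (by omega : ¬ (1 : ℕ) = m), add_zero, cycleType_def, Multiset.count_map]
      rw [Multiset.filter_congr (q := fun c => #c.support = m) (fun x _ => by simp [Function.comp, eq_comm])]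
      rfl
    · intro c hc d hd hcd
      exact (Equiv.Perm.cycleFactorsFinset_pairwise_disjoint σ (mem_filter.1 hc).1
        (mem_filter.1 hd).1 hcd).disjoint_support
end basic

section perfacts
open Equiv Equiv.Perm Finset
variable {n : ℕ} {σ : Equiv.Perm (Fin n)} {x : Fin n}

lemma x_mem_support_cycleOf (h : σ x ≠ x) : x ∈ (σ.cycleOf x).support :=
  Equiv.Perm.mem_support_cycleOf_iff.2 ⟨Equiv.Perm.SameCycle.refl _ _, Equiv.Perm.mem_support.2 h⟩

lemma per_pos : 1 ≤ per σ x := by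
  rw [per]
  by_cases h : σ x = x
  · simp [h]
  · rw [if_neg h]
    have := Equiv.Perm.two_le_card_support_cycleOf_iff.2 h
    omega

lemma pow_per_apply : (σ ^ per σ x) x = x := by
  by_cases h : σ x = x
  · rw [per, if_pos h]; simpa using h
  · rw [per, if_neg h]
    exact (Equiv.Perm.isCycleOn_support_cycleOf σ x).pow_card_apply (x_mem_support_cycleOf h)

lemma per_pow_inj {i j : ℕ} (hi : i < per σ x) (hj : j < per σ x)
    (hij : (σ ^ i) x = (σ ^ j) x) : i = j := by
  by_cases h : σ x = x
  · rw [per, if_pos h] at hi hj; omega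
  · rw [per, if_neg h] at hi hj
    have hmem := x_mem_support_cycleOf h
    have := ((Equiv.Perm.isCycleOn_support_cycleOf σ x).pow_apply_eq_pow_apply hmem).1 hij
    have h2 : i % (σ.cycleOf x).support.card = j % (σ.cycleOf x).support.card := this
    rwa [Nat.mod_eq_of_lt hi, Nat.mod_eq_of_lt hj] at h2

/-- if `(σ^m) x = x` then powers act mod `m`. -/
lemma pow_mod_apply {m : ℕ} (hx : (σ ^ m) x = x) (k : ℕ) : (σ ^ (k % m)) x = (σ ^ k) x := by
  have hq : ∀ q : ℕ, ((σ ^ m) ^ q) x = x := by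
    intro q
    induction q with
    | zero => simp
    | succ q ih => rw [_root_.pow_succ, Equiv.Perm.mul_apply, hx, ih]
  conv_rhs => rw [← Nat.div_add_mod k m, add_comm, pow_add, pow_mul]
  rw [Equiv.Perm.mul_apply, hq]

end perfacts

section emb
open Equiv Equiv.Perm Finset
variable {n m : ℕ}

/-- the orbit finset of an embedding -/
def orb (g : Fin m ↪ Fin n) : Finset (Fin n) := Finset.univ.map g

lemma mem_orb {g : Fin m ↪ Fin n} {y : Fin n} : y ∈ orb g ↔ ∃ i, g i = y := by
  simp [orb]

lemma card_orb (g : Fin m ↪ Fin n) : (orb g).card = m := by simp [orb]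

noncomputable def eqO (g : Fin m ↪ Fin n) : Fin m ≃ {y // y ∈ orb g} :=
  (Equiv.ofInjective g g.injective).trans (Equiv.subtypeEquivRight (fun y => by
    simp [Set.mem_range, mem_orb]))

lemma eqO_apply (g : Fin m ↪ Fin n) (i : Fin m) : (eqO g i : Fin n) = g i := rfl

noncomputable def eqC (hmn : m ≤ n) (g : Fin m ↪ Fin n) : Fin (n - m) ≃ {y // y ∈ (orb g)ᶜ} :=
  ((orb g)ᶜ.orderIsoOfFin (by
    rw [Finset.card_compl, card_orb, Fintype.card_fin])).toEquiv

lemma eqC_mem (hmn : m ≤ n) (g : Fin m ↪ Fin n) (z : Fin (n - m)) :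
    ((eqC hmn g z : Fin n) ∈ orb g) → False := by
  intro h
  exact absurd h (Finset.mem_compl.1 (eqC hmn g z).2)

/-- build a permutation from an `m`-cycle slot and a permutation of the complement. -/
noncomputable def bld (hmn : m ≤ n) (g : Fin m ↪ Fin n) (τ : Equiv.Perm (Fin (n - m))) :
    Equiv.Perm (Fin n) :=
  (finRotate m).extendDomain (eqO g) * τ.extendDomain (eqC hmn g)

lemma bld_apply_g (hmn : m ≤ n) (g : Fin m ↪ Fin n) (τ : Equiv.Perm (Fin (n - m)))
    (j : Fin m) : bld hmn g τ (g j) = g (finRotate m j) := by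
  have h1 : ¬ ((g j : Fin n) ∈ (orb g)ᶜ) := by
    simp [Finset.mem_compl, mem_orb]
  rw [bld, Equiv.Perm.mul_apply, Equiv.Perm.extendDomain_apply_not_subtype _ _ h1]
  have h2 : g j = ((eqO g j : {y // y ∈ orb g}) : Fin n) := rfl
  rw [h2, Equiv.Perm.extendDomain_apply_image]
  rfl

lemma bld_apply_notmem (hmn : m ≤ n) (g : Fin m ↪ Fin n) (τ : Equiv.Perm (Fin (n - m)))
    {y : Fin n} (hy : y ∈ (orb g)ᶜ) :
    bld hmn g τ y = ((eqC hmn g) (τ ((eqC hmn g).symm ⟨y, hy⟩)) : Fin n) := by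
  rw [bld, Equiv.Perm.mul_apply, Equiv.Perm.extendDomain_apply_subtype _ _ hy]
  apply Equiv.Perm.extendDomain_apply_not_subtype
  intro hmem
  exact eqC_mem hmn g _ hmem

lemma finRotate_val (hm : 1 ≤ m) (j : Fin m) : (finRotate m j).val = (j.val + 1) % m := by
  rcases m with - | m'
  · omega
  · rw [finRotate_succ_apply, Fin.val_add, Fin.val_one']
    conv_rhs => rw [Nat.add_mod, Nat.mod_eq_of_lt j.isLt]

lemma bld_pow (hm : 1 ≤ m) (hmn : m ≤ n) (g : Fin m ↪ Fin n) (τ : Equiv.Perm (Fin (n - m)))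
    {i : ℕ} (hi : i < m) : ((bld hmn g τ) ^ i) (g ⟨0, hm⟩) = g ⟨i, hi⟩ := by
  induction i with
  | zero => simp
  | succ i ih =>
    rw [_root_.pow_succ', Equiv.Perm.mul_apply, ih (by omega), bld_apply_g]
    apply congrArg
    apply Fin.ext
    rw [finRotate_val hm]
    simp [Nat.mod_eq_of_lt hi]

lemma bld_pow_m (hm : 1 ≤ m) (hmn : m ≤ n) (g : Fin m ↪ Fin n) (τ : Equiv.Perm (Fin (n - m))) :
    ((bld hmn g τ) ^ m) (g ⟨0, hm⟩) = g ⟨0, hm⟩ := by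
  obtain ⟨m', rfl⟩ : ∃ m', m = m' + 1 := ⟨m - 1, by omega⟩
  rw [_root_.pow_succ', Equiv.Perm.mul_apply, bld_pow hm hmn g τ (Nat.lt_succ_self m'),
    bld_apply_g]
  apply congrArg
  apply Fin.ext
  rw [finRotate_val hm]
  simp

end emb

section roundtrip
open Equiv Equiv.Perm Finset
variable {n m : ℕ} {σ : Equiv.Perm (Fin n)} {x : Fin n}

lemma per_bld (hm : 1 ≤ m) (hmn : m ≤ n) (g : Fin m ↪ Fin n) (τ : Equiv.Perm (Fin (n - m))) :
    per (bld hmn g τ) (g ⟨0, hm⟩) = m := by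
  rcases eq_or_lt_of_le hm with h1 | h2
  · subst h1
    have hfix : bld hmn g τ (g ⟨0, hm⟩) = g ⟨0, hm⟩ := by
      have := bld_pow_m hm hmn g τ
      rwa [pow_one] at this
    rw [per, if_pos hfix]
  · have h1' := bld_pow hm hmn g τ (show (1:ℕ) < m by omega)
    rw [pow_one] at h1'
    have hfix : bld hmn g τ (g ⟨0, hm⟩) ≠ g ⟨0, hm⟩ := by
      rw [h1']
      intro hc
      have := g.injective hc
      simp only [Fin.mk.injEq] at this
      omega
    rw [per, if_neg hfix]
    have hsupp : ((bld hmn g τ).cycleOf (g ⟨0, hm⟩)).support = orb g := by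
      ext y
      rw [Equiv.Perm.mem_support_cycleOf_iff]
      constructor
      · rintro ⟨hsc, -⟩
        obtain ⟨i, hi, rfl⟩ := Equiv.Perm.SameCycle.exists_pow_eq' hsc
        rw [← pow_mod_apply (bld_pow_m hm hmn g τ) i,
          bld_pow hm hmn g τ (Nat.mod_lt _ (by omega))]
        exact mem_orb.2 ⟨_, rfl⟩
      · intro hy
        obtain ⟨j, rfl⟩ := mem_orb.1 hy
        refine ⟨?_, Equiv.Perm.mem_support.2 hfix⟩
        have hj := bld_pow hm hmn g τ j.isLt
        rw [Fin.eta] at hj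
        exact ⟨(j.val : ℤ), by rw [zpow_natCast, hj]⟩
    rw [hsupp, card_orb]

/-- the orbit embedding of a point of cycle length `m`. -/
def gOf (σ : Equiv.Perm (Fin n)) (x : Fin n) (hper : per σ x = m) : Fin m ↪ Fin n :=
  ⟨fun i => (σ ^ (i : ℕ)) x, fun i j hij => Fin.ext
    (per_pow_inj (by rw [hper]; exact i.isLt) (by rw [hper]; exact j.isLt) hij)⟩

lemma gOf_apply (hper : per σ x = m) (i : Fin m) : gOf σ x hper i = (σ ^ (i : ℕ)) x := rfl

lemma mem_orb_gOf_iff (hper : per σ x = m) {y : Fin n} :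
    σ y ∈ orb (gOf σ x hper) ↔ y ∈ orb (gOf σ x hper) := by
  have hmx : (σ ^ m) x = x := by rw [← hper]; exact pow_per_apply
  have hm1 : 1 ≤ m := by rw [← hper]; exact per_pos
  constructor
  · intro hy
    obtain ⟨i, hi⟩ := mem_orb.1 hy
    rw [gOf_apply] at hi
    rcases Nat.eq_zero_or_pos i.val with h0 | hpos
    · have hxy : σ y = x := by rw [← hi, h0, pow_zero, Equiv.Perm.one_apply]
      have h2 : σ ((σ ^ (m-1)) x) = x := by
        rw [← Equiv.Perm.mul_apply, ← _root_.pow_succ', show m - 1 + 1 = m by omega]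
        exact hmx
      have hy' := σ.injective (hxy.trans h2.symm)
      rw [hy']
      exact mem_orb.2 ⟨⟨m-1, by omega⟩, rfl⟩
    · have h2 : σ ((σ ^ (i.val - 1)) x) = σ y := by
        rw [← Equiv.Perm.mul_apply, ← _root_.pow_succ', show i.val - 1 + 1 = i.val by omega]
        exact hi
      have hy' := σ.injective h2
      rw [← hy']
      exact mem_orb.2 ⟨⟨i.val - 1, by omega⟩, rfl⟩
  · intro hy
    obtain ⟨i, hi⟩ := mem_orb.1 hy
    rw [← hi, gOf_apply]
    have h2 : σ ((σ ^ (i.val)) x) = (σ ^ ((i.val + 1) % m)) x := by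
      rw [← Equiv.Perm.mul_apply, ← _root_.pow_succ', pow_mod_apply hmx]
    rw [h2]
    exact mem_orb.2 ⟨⟨(i.val+1) % m, Nat.mod_lt _ (by omega)⟩, rfl⟩

lemma orb_compl_invariant (hper : per σ x = m) :
    ∀ y, (y ∈ (orb (gOf σ x hper))ᶜ) ↔ (σ y ∈ (orb (gOf σ x hper))ᶜ) := fun y => by
  rw [Finset.mem_compl, Finset.mem_compl, mem_orb_gOf_iff hper]

/-- the permutation induced on the complement of the orbit. -/
noncomputable def tauOf (σ : Equiv.Perm (Fin n)) (x : Fin n) (hper : per σ x = m)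
    (hmn : m ≤ n) : Equiv.Perm (Fin (n - m)) :=
  ((eqC hmn (gOf σ x hper)).symm).permCongr (σ.subtypePerm (fun y => (orb_compl_invariant hper y).symm))

lemma bld_gOf_tauOf (hper : per σ x = m) (hmn : m ≤ n) :
    bld hmn (gOf σ x hper) (tauOf σ x hper hmn) = σ := by
  have hm1 : 1 ≤ m := by rw [← hper]; exact per_pos
  have hmx : (σ ^ m) x = x := by rw [← hper]; exact pow_per_apply
  apply Equiv.ext
  intro y
  by_cases hy : y ∈ orb (gOf σ x hper)
  · obtain ⟨i, rfl⟩ := mem_orb.1 hy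
    rw [bld_apply_g]
    have h1 : σ (gOf σ x hper i) = (σ ^ ((i.val + 1) % m)) x := by
      rw [gOf_apply, ← Equiv.Perm.mul_apply, ← _root_.pow_succ', pow_mod_apply hmx]
    rw [h1, gOf_apply, finRotate_val hm1]
  · have hyc : y ∈ (orb (gOf σ x hper))ᶜ := Finset.mem_compl.2 hy
    rw [bld_apply_notmem hmn _ _ hyc]
    have h2 : tauOf σ x hper hmn ((eqC hmn (gOf σ x hper)).symm ⟨y, hyc⟩)
        = (eqC hmn (gOf σ x hper)).symm ⟨σ y, (orb_compl_invariant hper y).1 hyc⟩ := by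
      rw [tauOf, Equiv.permCongr_apply, Equiv.symm_symm, Equiv.apply_symm_apply]
      rfl
    rw [h2, Equiv.apply_symm_apply]

lemma gOf_zero (hper : per σ x = m) (hm : 1 ≤ m) : gOf σ x hper ⟨0, hm⟩ = x := by
  rw [gOf_apply]
  simp

end roundtrip

section roundtripB
open Equiv Equiv.Perm Finset
variable {n m : ℕ} {σ : Equiv.Perm (Fin n)} {x : Fin n}

lemma gOf_bld (hm : 1 ≤ m) (hmn : m ≤ n) (g : Fin m ↪ Fin n) (τ : Equiv.Perm (Fin (n - m))) :
    gOf (bld hmn g τ) (g ⟨0, hm⟩) (per_bld hm hmn g τ) = g := by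
  apply DFunLike.ext
  intro i
  rw [gOf_apply]
  have hi := bld_pow hm hmn g τ i.isLt
  rwa [Fin.eta] at hi

lemma eqC_tauOf (hper : per σ x = m) (hmn : m ≤ n) (z : Fin (n - m)) :
    ((eqC hmn (gOf σ x hper)) (tauOf σ x hper hmn z) : Fin n)
      = σ ((eqC hmn (gOf σ x hper)) z : Fin n) := by
  rw [tauOf, Equiv.permCongr_apply, Equiv.symm_symm, Equiv.apply_symm_apply]
  rfl

lemma tauOf_bld (hm : 1 ≤ m) (hmn : m ≤ n) (g : Fin m ↪ Fin n) (τ : Equiv.Perm (Fin (n - m))) :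
    tauOf (bld hmn g τ) (g ⟨0, hm⟩) (per_bld hm hmn g τ) hmn = τ := by
  apply Equiv.ext
  intro z
  have h1 := eqC_tauOf (per_bld hm hmn g τ) hmn z
  rw [gOf_bld hm hmn g τ] at h1
  have hmem : ((eqC hmn g z : Fin n)) ∈ (orb g)ᶜ := (eqC hmn g z).2
  rw [bld_apply_notmem hmn g τ hmem] at h1
  have h2 : (⟨(eqC hmn g z : Fin n), hmem⟩ : {y // y ∈ (orb g)ᶜ}) = eqC hmn g z := rfl
  rw [h2, Equiv.symm_apply_apply] at h1
  exact (eqC hmn g).injective (Subtype.coe_injective h1)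

lemma fullCycleType_bld (hm : 1 ≤ m) (hmn : m ≤ n) (g : Fin m ↪ Fin n)
    (τ : Equiv.Perm (Fin (n - m))) :
    fullCycleType (bld hmn g τ) = m ::ₘ fullCycleType τ := by
  have hsle : τ.cycleType.sum ≤ n - m := cycleType_sum_le τ
  rcases eq_or_lt_of_le hm with h1 | h2
  · subst h1
    have hrot : (finRotate 1) = 1 := by
      apply Subsingleton.elim
    have hbld : bld hmn g τ = τ.extendDomain (eqC hmn g) := by
      rw [bld, hrot, Equiv.Perm.extendDomain_one, one_mul]
    rw [fullCycleType, fullCycleType, hbld, cycleType_extendDomain]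
    have hn1 : n - τ.cycleType.sum = (n - 1 - τ.cycleType.sum) + 1 := by omega
    rw [hn1, Multiset.replicate_succ]
    rw [add_comm, Multiset.cons_add, add_comm]
  · have hdisj : Equiv.Perm.Disjoint ((finRotate m).extendDomain (eqO g))
        (τ.extendDomain (eqC hmn g)) := by
      intro y
      by_cases hy : y ∈ orb g
      · right
        apply Equiv.Perm.extendDomain_apply_not_subtype
        simp [Finset.mem_compl, hy]
      · left
        exact Equiv.Perm.extendDomain_apply_not_subtype _ _ hy
    have hct : (bld hmn g τ).cycleType = {m} + τ.cycleType := by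
      rw [bld, hdisj.cycleType_mul, cycleType_extendDomain, cycleType_extendDomain,
        cycleType_finRotate_of_le h2]
    rw [fullCycleType, fullCycleType, hct]
    rw [Multiset.sum_add, Multiset.sum_singleton]
    rw [show n - (m + τ.cycleType.sum) = (n - m) - τ.cycleType.sum by omega]
    rw [Multiset.singleton_add, Multiset.cons_add]

end roundtripB

section keysum
open Equiv Equiv.Perm Finset
variable {n m : ℕ}

lemma cycleCount_bld (hm : 1 ≤ m) (hmn : m ≤ n) (g : Fin m ↪ Fin n)
    (τ : Equiv.Perm (Fin (n - m))) (i : ℕ) :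
    cycleCount (bld hmn g τ) i = cycleCount τ i + if i = m then 1 else 0 := by
  rw [cycleCount, fullCycleType_bld hm hmn, Multiset.count_cons, cycleCount]

lemma W_bld (θ : ℕ → ℝ) (hm : 1 ≤ m) (hmn : m ≤ n) (g : Fin m ↪ Fin n)
    (τ : Equiv.Perm (Fin (n - m))) :
    ∏ i ∈ Icc 1 n, θ i ^ cycleCount (bld hmn g τ) i
      = θ m * ∏ i ∈ Icc 1 (n - m), θ i ^ cycleCount τ i := by
  have h1 : ∀ i ∈ Icc 1 n, θ i ^ cycleCount (bld hmn g τ) i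
      = θ i ^ cycleCount τ i * (if i = m then θ i else 1) := by
    intro i _
    rw [cycleCount_bld hm hmn, pow_add]
    congr 1
    split <;> simp
  rw [Finset.prod_congr rfl h1, Finset.prod_mul_distrib]
  rw [Finset.prod_ite_eq' (Icc 1 n) m θ, if_pos (by rw [Finset.mem_Icc]; omega)]
  rw [mul_comm]
  congr 1
  refine (Finset.prod_subset (Finset.Icc_subset_Icc_right (by omega)) ?_).symm
  intro i hi hni
  have hlt : n - m < i := by
    simp only [Finset.mem_Icc] at hi hni
    omega
  rw [cycleCount_eq_zero_of_lt hlt, pow_zero]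

lemma key_sum (θ : ℕ → ℝ) (G : ℕ → ℝ) (hm : 1 ≤ m) (hmn : m ≤ n) :
    (m : ℝ) * ∑ σ : Equiv.Perm (Fin n),
        (∏ i ∈ Icc 1 n, θ i ^ cycleCount σ i) *
          ((cycleCount σ m : ℝ) * G (cycleCount σ m - 1))
      = (n.descFactorial m : ℝ) * θ m *
        ∑ τ : Equiv.Perm (Fin (n - m)),
          (∏ i ∈ Icc 1 (n - m), θ i ^ cycleCount τ i) * G (cycleCount τ m) := by
  classical
  have hstep1 :
      ∑ p ∈ (univ : Finset (Equiv.Perm (Fin n) × Fin n)).filter (fun p => per p.1 p.2 = m),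
          (∏ i ∈ Icc 1 n, θ i ^ cycleCount p.1 i) * G (cycleCount p.1 m - 1)
        = (m : ℝ) * ∑ σ : Equiv.Perm (Fin n),
            (∏ i ∈ Icc 1 n, θ i ^ cycleCount σ i) *
              ((cycleCount σ m : ℝ) * G (cycleCount σ m - 1)) := by
    rw [Finset.sum_finset_product (univ.filter (fun p : Equiv.Perm (Fin n) × Fin n => per p.1 p.2 = m))
        univ (fun σ => univ.filter (fun x => per σ x = m)) (by simp)]
    rw [Finset.mul_sum]
    apply Finset.sum_congr rfl
    intro σ _
    dsimp only
    rw [Finset.sum_const, card_per_eq hm σ, nsmul_eq_mul]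
    push_cast
    ring
  rw [← hstep1]
  have hstep2 :
      (n.descFactorial m : ℝ) * θ m *
          ∑ τ : Equiv.Perm (Fin (n - m)),
            (∏ i ∈ Icc 1 (n - m), θ i ^ cycleCount τ i) * G (cycleCount τ m)
        = ∑ b : (Fin m ↪ Fin n) × Equiv.Perm (Fin (n - m)),
            θ m * ((∏ i ∈ Icc 1 (n - m), θ i ^ cycleCount b.2 i) * G (cycleCount b.2 m)) := by
    rw [Fintype.sum_prod_type]
    dsimp only
    rw [Finset.sum_const, Finset.card_univ, Fintype.card_embedding_eq,
      Fintype.card_fin, Fintype.card_fin, nsmul_eq_mul, mul_assoc, Finset.mul_sum]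
  rw [hstep2]
  refine Finset.sum_bij'
    (fun p hp => ((gOf p.1 p.2 ((Finset.mem_filter.1 hp).2),
      tauOf p.1 p.2 ((Finset.mem_filter.1 hp).2) hmn) : (Fin m ↪ Fin n) × Equiv.Perm (Fin (n - m))))
    (fun b _ => ((bld hmn b.1 b.2, b.1 ⟨0, hm⟩) : Equiv.Perm (Fin n) × Fin n))
    ?_ ?_ ?_ ?_ ?_
  · intro p hp
    exact Finset.mem_univ _
  · intro b _
    exact Finset.mem_filter.2 ⟨Finset.mem_univ _, per_bld hm hmn b.1 b.2⟩
  · intro p hp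
    have hper := (Finset.mem_filter.1 hp).2
    exact Prod.ext (bld_gOf_tauOf hper hmn) (gOf_zero hper hm)
  · intro b hb
    exact Prod.ext (gOf_bld hm hmn b.1 b.2) (tauOf_bld hm hmn b.1 b.2)
  · intro p hp
    have hper := (Finset.mem_filter.1 hp).2
    conv_lhs => rw [← bld_gOf_tauOf hper hmn]
    rw [W_bld θ hm hmn, cycleCount_bld hm hmn, if_pos rfl, Nat.add_sub_cancel]
    ring

end keysum

section final
open Equiv Equiv.Perm Finset

lemma T_lemma (θ : ℕ → ℝ) (h : ℕ → ℝ)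
    (hh : ∀ j, h j = ((j ! : ℝ))⁻¹ *
      ∑ σ : Equiv.Perm (Fin j), ∏ i ∈ Finset.Icc 1 j, θ i ^ cycleCount σ i)
    (m : ℕ) (hm : 1 ≤ m) :
    ∀ k n, m * k ≤ n →
      ∑ σ : Equiv.Perm (Fin n), (∏ i ∈ Icc 1 n, θ i ^ cycleCount σ i) *
          ((cycleCount σ m).descFactorial k : ℝ)
        = (θ m / m) ^ k * ((n ! : ℝ) * h (n - m * k)) := by
  intro k
  induction k with
  | zero =>
    intro n _
    simp only [Nat.descFactorial_zero, Nat.cast_one, mul_one, pow_zero, one_mul, Nat.mul_zero,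
      Nat.sub_zero]
    rw [hh n, ← mul_assoc, mul_inv_cancel₀ (Nat.cast_ne_zero.2 (Nat.factorial_ne_zero n)),
      one_mul]
  | succ k ih =>
    intro n hn
    have hmn : m ≤ n := le_trans (by nlinarith) hn
    have hdesc : ∀ c : ℕ, (c.descFactorial (k+1) : ℝ)
        = (c : ℝ) * (((c - 1).descFactorial k : ℝ)) := by
      intro c
      rcases c with - | c
      · simp
      · rw [Nat.succ_descFactorial_succ]
        push_cast [Nat.succ_sub_one]
        ring
    have hsum : ∑ σ : Equiv.Perm (Fin n), (∏ i ∈ Icc 1 n, θ i ^ cycleCount σ i) *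
          ((cycleCount σ m).descFactorial (k+1) : ℝ)
        = ∑ σ : Equiv.Perm (Fin n), (∏ i ∈ Icc 1 n, θ i ^ cycleCount σ i) *
            ((cycleCount σ m : ℝ) * (((cycleCount σ m - 1).descFactorial k : ℝ))) := by
      apply Finset.sum_congr rfl
      intro σ _
      rw [hdesc]
    rw [hsum]
    have hm0 : (m : ℝ) ≠ 0 := Nat.cast_ne_zero.2 (by omega)
    have hkey := key_sum θ (fun c => (c.descFactorial k : ℝ)) hm hmn
    have hEq : ∑ σ : Equiv.Perm (Fin n), (∏ i ∈ Icc 1 n, θ i ^ cycleCount σ i) *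
          ((cycleCount σ m : ℝ) * (((cycleCount σ m - 1).descFactorial k : ℝ)))
        = ((n.descFactorial m : ℝ) * θ m *
            ∑ τ : Equiv.Perm (Fin (n - m)), (∏ i ∈ Icc 1 (n - m), θ i ^ cycleCount τ i) *
              ((cycleCount τ m).descFactorial k : ℝ)) / m := by
      rw [eq_div_iff hm0, mul_comm]
      exact hkey
    have hle : m * k ≤ n - m := by
      have hx : m * (k + 1) = m * k + m := by ring
      omega
    rw [hEq, ih (n - m) hle]
    have hfac : ((n - m)! : ℝ) * (n.descFactorial m : ℝ) = (n ! : ℝ) := by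
      rw [← Nat.cast_mul, Nat.factorial_mul_descFactorial hmn]
    have hsub : n - m - m * k = n - m * (k + 1) := by
      have : m * (k + 1) = m * k + m := by ring
      omega
    rw [hsub, div_eq_iff hm0, pow_succ, ← hfac]
    field_simp

end final


/-- The `k`-th factorial moment of the cycle count `C_m` under the weighted
measure `P_Θ^n`: `E_Θ[(C_m)_k] = (θ_m/m)^k h_{n-mk}/h_n` for `mk ≤ n`. -/
theorem factorial_moment_cycleCount (θ : ℕ → ℝ) (hθ : ∀ m, 0 ≤ θ m) (h : ℕ → ℝ)
    (hh : ∀ j, h j = ((j ! : ℝ))⁻¹ *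
      ∑ σ : Equiv.Perm (Fin j), ∏ i ∈ Finset.Icc 1 j, θ i ^ cycleCount σ i)
    (n m k : ℕ) (hm : 1 ≤ m) (hmk : m * k ≤ n) (hn : h n ≠ 0) :
    (1 / (h n * (n ! : ℝ))) *
        ∑ σ : Equiv.Perm (Fin n),
          (∏ i ∈ Finset.Icc 1 n, θ i ^ cycleCount σ i) *
            ((cycleCount σ m).descFactorial k : ℝ)
      = (θ m / m) ^ k * h (n - m * k) / h n := by
  rw [T_lemma θ h hh m hm k n hmk]
  have hfn : (n ! : ℝ) ≠ 0 := Nat.cast_ne_zero.2 (Nat.factorial_ne_zero n)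
  field_simp
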